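/- arXiv:2510.26924 — 2 statements merged into one kernel-verified Lean document; each statement's English description precedes it below -/
import Mathlib

section
/- Let f : ℝ → ℝ be Lipschitz with constant L, let I = [α, β] ⊂ ℝ, let O ⊂ I be open, and suppose g : I → ℝ satisfies g = f on I \ O and g is Lipschitz with constant L on the closure of each connected component of O, with g = f at the endpoints of each component. Then g is Lipschitz on I with constant at most 2L. -/
open Set

/-- Barrier point to the right: the sup of a connected component. -/
lemma barrier_sup (O : Set ℝ) (α β : ℝ) (hO : IsOpen O) (hOI : O ⊆ Icc α β)
    {x y : ℝ} (hx : x ∈ O) (hxy : x ≤ y) (hy : y ∉ closure (connectedComponentIn O x)) :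
    ∃ b, b ∈ closure (connectedComponentIn O x) ∧ b ∈ frontier (connectedComponentIn O x) ∧
      b ∈ Icc α β ∧ x ≤ b ∧ b ≤ y ∧ b ∉ O := by
  set J := connectedComponentIn O x with hJ
  have hJo : IsOpen J := hO.connectedComponentIn
  have hxJ : x ∈ J := mem_connectedComponentIn hx
  have hJsub : J ⊆ O := connectedComponentIn_subset O x
  have hJI : J ⊆ Icc α β := hJsub.trans hOI
  have hJord : OrdConnected J :=
    (isPreconnected_connectedComponentIn).ordConnected
  have hbdd : BddAbove J := (bddAbove_Icc (a := α) (b := β)).mono hJI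
  have hne : J.Nonempty := ⟨x, hxJ⟩
  have hlub : IsLUB J (sSup J) := isLUB_csSup hne hbdd
  set b := sSup J with hb
  have hbcl : b ∈ closure J := hlub.mem_closure hne
  have hxb : x ≤ b := hlub.1 hxJ
  have hJy : J ⊆ Iic y := by
    intro p hp
    by_contra hpy
    rw [mem_Iic, not_le] at hpy
    exact hy (subset_closure (hJord.out hxJ hp ⟨hxy, hpy.le⟩))
  have hby : b ≤ y := hlub.2 hJy
  have hbJ : b ∉ J := by
    intro hbJ
    rcases Metric.isOpen_iff.1 hJo b hbJ with ⟨ε, hε, hball⟩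
    have : b + ε / 2 ∈ J := hball (by
      rw [Metric.mem_ball, Real.dist_eq, show b + ε / 2 - b = ε / 2 by ring,
        abs_of_pos (half_pos hε)]
      linarith)
    have := hlub.1 this
    linarith
  have hbO : b ∉ O := by
    intro hbO
    set K := connectedComponentIn O b with hK
    have hKo : IsOpen K := hO.connectedComponentIn
    have hbK : b ∈ K := mem_connectedComponentIn hbO
    rcases mem_closure_iff.1 hbcl K hKo hbK with ⟨p, hpK, hpJ⟩
    have h1 : J = connectedComponentIn O p := connectedComponentIn_eq hpJ
    have h2 : K = connectedComponentIn O p := connectedComponentIn_eq hpK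
    exact hbJ (h1 ▸ h2 ▸ hbK)
  refine ⟨b, hbcl, ?_, ?_, hxb, hby, hbO⟩
  · rw [frontier, hJo.interior_eq]; exact ⟨hbcl, hbJ⟩
  · exact (isClosed_Icc.closure_subset_iff.2 hJI) hbcl

/-- Barrier point to the left: the inf of a connected component. -/
lemma barrier_inf (O : Set ℝ) (α β : ℝ) (hO : IsOpen O) (hOI : O ⊆ Icc α β)
    {x y : ℝ} (hy : y ∈ O) (hxy : x ≤ y) (hx : x ∉ O) :
    ∃ a, a ∈ closure (connectedComponentIn O y) ∧ a ∈ frontier (connectedComponentIn O y) ∧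
      a ∈ Icc α β ∧ x ≤ a ∧ a ≤ y ∧ a ∉ O := by
  set J := connectedComponentIn O y with hJ
  have hJo : IsOpen J := hO.connectedComponentIn
  have hyJ : y ∈ J := mem_connectedComponentIn hy
  have hJsub : J ⊆ O := connectedComponentIn_subset O y
  have hJI : J ⊆ Icc α β := hJsub.trans hOI
  have hJord : OrdConnected J :=
    (isPreconnected_connectedComponentIn).ordConnected
  have hbdd : BddBelow J := (bddBelow_Icc (a := β) (b := α)).mono hJI
  have hne : J.Nonempty := ⟨y, hyJ⟩
  have hglb : IsGLB J (sInf J) := isGLB_csInf hne hbdd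
  set a := sInf J with ha
  have hacl : a ∈ closure J := hglb.mem_closure hne
  have hay : a ≤ y := hglb.1 hyJ
  have hJx : J ⊆ Ici x := by
    intro p hp
    by_contra hpx
    rw [mem_Ici, not_le] at hpx
    exact hx (hJsub (hJord.out hp hyJ ⟨hpx.le, hxy⟩))
  have hxa : x ≤ a := hglb.2 hJx
  have haJ : a ∉ J := by
    intro haJ
    rcases Metric.isOpen_iff.1 hJo a haJ with ⟨ε, hε, hball⟩
    have : a - ε / 2 ∈ J := hball (by
      rw [Metric.mem_ball, Real.dist_eq, show a - ε / 2 - a = -(ε / 2) by ring,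
        abs_neg, abs_of_pos (half_pos hε)]
      linarith)
    have := hglb.1 this
    linarith
  have haO : a ∉ O := by
    intro haO
    set K := connectedComponentIn O a with hK
    have hKo : IsOpen K := hO.connectedComponentIn
    have haK : a ∈ K := mem_connectedComponentIn haO
    rcases mem_closure_iff.1 hacl K hKo haK with ⟨p, hpK, hpJ⟩
    have h1 : J = connectedComponentIn O p := connectedComponentIn_eq hpJ
    have h2 : K = connectedComponentIn O p := connectedComponentIn_eq hpK
    exact haJ (h1 ▸ h2 ▸ haK)
  refine ⟨a, hacl, ?_, ?_, hxa, hay, haO⟩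
  · rw [frontier, hJo.interior_eq]; exact ⟨hacl, haJ⟩
  · exact (isClosed_Icc.closure_subset_iff.2 hJI) hacl

/-- Gluing lemma: modifying an `L`-Lipschitz function inside an open subset `O` of
`[α,β]`, staying `L`-Lipschitz on the closure of each connected component of `O` and
agreeing with the original function at the component endpoints and outside `O`,
produces a `2L`-Lipschitz function on `[α,β]`. -/
theorem stmt4 (f g : ℝ → ℝ) (L : NNReal) (α β : ℝ) (O : Set ℝ)
    (hO : IsOpen O) (hOI : O ⊆ Icc α β)
    (hf : LipschitzWith L f)
    (hfg : ∀ x ∈ Icc α β \ O, g x = f x)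
    (hgO : ∀ x ∈ O, LipschitzOnWith L g (closure (connectedComponentIn O x)))
    (hend : ∀ x ∈ O, ∀ y ∈ frontier (connectedComponentIn O x), g y = f y) :
    LipschitzOnWith (2 * L) g (Icc α β) := by
  -- step 1: one-sided estimate starting from a point outside O
  have sub1 : ∀ x ∈ Icc α β, x ∉ O → ∀ y ∈ Icc α β, x ≤ y →
      dist (g x) (g y) ≤ L * dist x y := by
    intro x hxI hxO y hyI hxy
    by_cases hyO : y ∈ O
    · obtain ⟨a, hacl, hafr, haI, hxa, hay, haO⟩ := barrier_inf O α β hO hOI hyO hxy hxO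
      have hga : g a = f a := hend y hyO a hafr
      have h1 : dist (g x) (g a) ≤ L * dist x a := by
        rw [hfg x ⟨hxI, hxO⟩, hga]; exact hf.dist_le_mul x a
      have h2 : dist (g a) (g y) ≤ L * dist a y :=
        (hgO y hyO).dist_le_mul a hacl y (subset_closure (mem_connectedComponentIn hyO))
      calc dist (g x) (g y) ≤ dist (g x) (g a) + dist (g a) (g y) := dist_triangle _ _ _
        _ ≤ L * dist x a + L * dist a y := add_le_add h1 h2
        _ = L * dist x y := by
            rw [Real.dist_eq, Real.dist_eq, Real.dist_eq,
              abs_of_nonpos (by linarith), abs_of_nonpos (by linarith),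
              abs_of_nonpos (by linarith)]; ring
    · rw [hfg x ⟨hxI, hxO⟩, hfg y ⟨hyI, hyO⟩]; exact hf.dist_le_mul x y
  have main : ∀ x ∈ Icc α β, ∀ y ∈ Icc α β, x ≤ y →
      dist (g x) (g y) ≤ L * dist x y := by
    intro x hxI y hyI hxy
    by_cases hxO : x ∈ O
    · by_cases hycl : y ∈ closure (connectedComponentIn O x)
      · exact (hgO x hxO).dist_le_mul x
          (subset_closure (mem_connectedComponentIn hxO)) y hycl
      · obtain ⟨b, hbcl, hbfr, hbI, hxb, hby, hbO⟩ :=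
          barrier_sup O α β hO hOI hxO hxy hycl
        have h1 : dist (g x) (g b) ≤ L * dist x b :=
          (hgO x hxO).dist_le_mul x
            (subset_closure (mem_connectedComponentIn hxO)) b hbcl
        have h2 : dist (g b) (g y) ≤ L * dist b y := sub1 b hbI hbO y hyI hby
        calc dist (g x) (g y) ≤ dist (g x) (g b) + dist (g b) (g y) := dist_triangle _ _ _
          _ ≤ L * dist x b + L * dist b y := add_le_add h1 h2
          _ = L * dist x y := by
              rw [Real.dist_eq, Real.dist_eq, Real.dist_eq,
                abs_of_nonpos (by linarith), abs_of_nonpos (by linarith),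
                abs_of_nonpos (by linarith)]; ring
    · exact sub1 x hxI hxO y hyI hxy
  rw [lipschitzOnWith_iff_dist_le_mul]
  intro x hx y hy
  have hL : ∀ u v : ℝ, (L : ℝ) * dist u v ≤ (2 * L : NNReal) * dist u v := by
    intro u v
    push_cast
    nlinarith [dist_nonneg (x := u) (y := v), L.coe_nonneg]
  rcases le_total x y with h | h
  · exact (main x hx y hy h).trans (hL x y)
  · rw [dist_comm (g x), dist_comm x]
    exact (main y hy x hx h).trans (hL y x)
end

section
/- Let Ω ⊂ ℝ² be a bounded open set and Θ : Ω → Θ(Ω) ⊂ ℝ² a bi-Lipschitz homeomorphism with ‖DΘ − Id‖_{L∞} ≤ δ and ‖DΘ⁻¹∘Θ − Id‖_{L∞} ≤ δ for some δ < 1/4. Then for every u ∈ W¹₂(Ω), the quadratic form q(u) = ∫_Ω |det DΘ| |(DΘ⁻¹)ᵀ(Θ) ∇u|² dx satisfies q(u) ≥ (1 − Cδ) ∫_Ω |∇u|² dx for a universal constant C. -/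
open MeasureTheory

section Aux
open ContinuousLinearMap

local notation "E2" => EuclideanSpace ℝ (Fin 2)

lemma coord_le_norm (v : E2) (i : Fin 2) : |v i| ≤ ‖v‖ := by
  have := EuclideanSpace.norm_eq v
  rw [this]
  have h1 : |v i| = Real.sqrt ((v i)^2) := by
    rw [Real.sqrt_sq_eq_abs]
  rw [h1]
  apply Real.sqrt_le_sqrt
  have : (v i)^2 ≤ ∑ j, (v j)^2 := by
    exact Finset.single_le_sum (f := fun j => (v j)^2) (fun j _ => sq_nonneg _) (Finset.mem_univ i)
  simpa [sq] using this

lemma adj_lower (B : E2 →L[ℝ] E2) (δ : ℝ) (hδ : 0 ≤ δ)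
    (hB : ‖B - ContinuousLinearMap.id ℝ E2‖ ≤ δ) (v : E2) :
    (1 - δ) * ‖v‖ ≤ ‖adjoint B v‖ := by
  have key : adjoint B v = v + adjoint (B - ContinuousLinearMap.id ℝ E2) v := by
    simp [map_sub, adjoint_id]
  rw [key]
  have h1 : ‖adjoint (B - ContinuousLinearMap.id ℝ E2) v‖ ≤ δ * ‖v‖ := by
    calc ‖adjoint (B - ContinuousLinearMap.id ℝ E2) v‖
        ≤ ‖adjoint (B - ContinuousLinearMap.id ℝ E2)‖ * ‖v‖ := le_opNorm _ _
      _ ≤ δ * ‖v‖ := by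
          gcongr
          rw [ContinuousLinearMap.adjoint.norm_map]
          exact hB
  have h2 : ‖v‖ ≤ ‖v + adjoint (B - ContinuousLinearMap.id ℝ E2) v‖ + ‖adjoint (B - ContinuousLinearMap.id ℝ E2) v‖ := by
    have := norm_sub_le (v + adjoint (B - ContinuousLinearMap.id ℝ E2) v) (adjoint (B - ContinuousLinearMap.id ℝ E2) v)
    simpa using this
  nlinarith [norm_nonneg v]

lemma det_lower (A : E2 →L[ℝ] E2) (δ : ℝ) (hδ : 0 ≤ δ) (hδ1 : δ ≤ 1)
    (hA : ‖A - ContinuousLinearMap.id ℝ E2‖ ≤ δ) :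
    1 - 2*δ ≤ LinearMap.det A.toLinearMap := by
  set b := (EuclideanSpace.basisFun (Fin 2) ℝ).toBasis with hb
  rw [← LinearMap.det_toMatrix b, Matrix.det_fin_two]
  have entry : ∀ i j : Fin 2, LinearMap.toMatrix b b A.toLinearMap i j = A (b j) i := by
    intro i j
    rw [LinearMap.toMatrix_apply]
    simp [hb]
  have hbj : ∀ j : Fin 2, ‖b j‖ = 1 := by
    intro j
    simp [hb]
  have hcoef : ∀ i j : Fin 2, |A (b j) i - (ContinuousLinearMap.id ℝ E2) (b j) i| ≤ δ := by
    intro i j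
    have : A (b j) i - (ContinuousLinearMap.id ℝ E2) (b j) i
        = ((A - ContinuousLinearMap.id ℝ E2) (b j)) i := by simp
    rw [this]
    calc |((A - ContinuousLinearMap.id ℝ E2) (b j)) i| ≤ ‖(A - ContinuousLinearMap.id ℝ E2) (b j)‖ :=
          coord_le_norm _ _
      _ ≤ ‖A - ContinuousLinearMap.id ℝ E2‖ * ‖b j‖ := le_opNorm _ _
      _ ≤ δ := by rw [hbj]; simpa using hA
  have hid : ∀ i j : Fin 2, (ContinuousLinearMap.id ℝ E2) (b j) i = if i = j then 1 else 0 := by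
    intro i j
    simp [hb, EuclideanSpace.single_apply]
  have e00 := hcoef 0 0
  have e11 := hcoef 1 1
  have e01 := hcoef 0 1
  have e10 := hcoef 1 0
  rw [hid] at e00 e11 e01 e10
  simp at e00 e11 e01 e10
  rw [entry 0 0, entry 1 1, entry 0 1, entry 1 0]
  rw [abs_le] at e00 e11 e01 e10
  have ha' : 0 ≤ A (b 0) 0 - (1-δ) := by linarith [e00.1]
  have hd' : 0 ≤ A (b 1) 1 - (1-δ) := by linarith [e11.1]
  have p1 : (1-δ)*(1-δ) ≤ A (b 0) 0 * A (b 1) 1 := by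
    nlinarith [mul_nonneg ha' hd', ha', hd']
  have p2 : A (b 1) 0 * A (b 0) 1 ≤ δ*δ := by
    nlinarith [mul_nonneg (by linarith [e01.2] : 0 ≤ δ - A (b 1) 0) (by linarith [e10.1] : 0 ≤ δ + A (b 0) 1),
      mul_nonneg (by linarith [e01.1] : 0 ≤ δ + A (b 1) 0) (by linarith [e10.2] : 0 ≤ δ - A (b 0) 1)]
  nlinarith [p1, p2]

lemma pointwise_est (A B : E2 →L[ℝ] E2) (δ : ℝ) (hδ : 0 ≤ δ) (hδ4 : δ < 1/4)
    (hA : ‖A - ContinuousLinearMap.id ℝ E2‖ ≤ δ)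
    (hB : ‖B - ContinuousLinearMap.id ℝ E2‖ ≤ δ) (v : E2) :
    (1 - 4*δ) * ‖v‖^2 ≤ |LinearMap.det A.toLinearMap| * ‖adjoint B v‖^2 := by
  have hdet : 1 - 2*δ ≤ LinearMap.det A.toLinearMap :=
    det_lower A δ hδ (by linarith) hA
  have hdet' : 1 - 2*δ ≤ |LinearMap.det A.toLinearMap| :=
    le_trans hdet (le_abs_self _)
  have hadj := adj_lower B δ hδ hB v
  have h1δ : 0 ≤ 1 - δ := by linarith
  have hsq : (1-δ)^2 * ‖v‖^2 ≤ ‖adjoint B v‖^2 := by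
    have := mul_le_mul hadj hadj (by positivity) (norm_nonneg _)
    nlinarith [this]
  have hprod : (1 - 2*δ) * ((1-δ)^2 * ‖v‖^2) ≤
      |LinearMap.det A.toLinearMap| * ‖adjoint B v‖^2 :=
    mul_le_mul hdet' hsq (by positivity) (abs_nonneg _)
  nlinarith [sq_nonneg ‖v‖, hprod,
    mul_nonneg (mul_nonneg (mul_nonneg hδ hδ) (by linarith : (0:ℝ) ≤ 5 - 2*δ)) (sq_nonneg ‖v‖)]


end Aux

/-- Coercivity of the transformed Dirichlet form: if the a.e. differential `A = DΘ`
and `B = DΘ⁻¹ ∘ Θ` are `δ`-close to the identity (`δ < 1/4`) and mutually inverse,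
then `∫ |det DΘ| |(DΘ⁻¹)ᵀ(Θ) ∇u|² ≥ (1 - Cδ) ∫ |∇u|²` for a universal constant `C`,
where `g = ∇u` is the (L²) gradient of `u ∈ W¹₂(Ω)`. -/
theorem stmt7 :
    ∃ Cu : ℝ, 0 < Cu ∧
      ∀ Ω : Set (EuclideanSpace ℝ (Fin 2)), MeasurableSet Ω →
      ∀ (A B : EuclideanSpace ℝ (Fin 2) →
          (EuclideanSpace ℝ (Fin 2) →L[ℝ] EuclideanSpace ℝ (Fin 2)))
        (δ : ℝ), 0 ≤ δ → δ < 1 / 4 →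
        (∀ x ∈ Ω, ‖A x - ContinuousLinearMap.id ℝ (EuclideanSpace ℝ (Fin 2))‖ ≤ δ) →
        (∀ x ∈ Ω, ‖B x - ContinuousLinearMap.id ℝ (EuclideanSpace ℝ (Fin 2))‖ ≤ δ) →
        (∀ x ∈ Ω, (B x).comp (A x) = ContinuousLinearMap.id ℝ (EuclideanSpace ℝ (Fin 2))) →
        ∀ g : EuclideanSpace ℝ (Fin 2) → EuclideanSpace ℝ (Fin 2),
          IntegrableOn (fun x => ‖g x‖ ^ 2) Ω volume →
          IntegrableOn (fun x => |LinearMap.det (A x).toLinearMap| *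
              ‖ContinuousLinearMap.adjoint (B x) (g x)‖ ^ 2) Ω volume →
          (1 - Cu * δ) * ∫ x in Ω, ‖g x‖ ^ 2 ≤
            ∫ x in Ω, |LinearMap.det (A x).toLinearMap| *
              ‖ContinuousLinearMap.adjoint (B x) (g x)‖ ^ 2 := by
  refine ⟨4, by norm_num, ?_⟩
  intro Ω hΩ A B δ hδ hδ4 hA hB _hBA g hg hRHS
  have key : ∀ x ∈ Ω, (1 - 4*δ) * ‖g x‖^2 ≤
      |LinearMap.det (A x).toLinearMap| * ‖ContinuousLinearMap.adjoint (B x) (g x)‖^2 := fun x hx =>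
    pointwise_est (A x) (B x) δ hδ hδ4 (hA x hx) (hB x hx) (g x)
  calc (1 - 4 * δ) * ∫ x in Ω, ‖g x‖ ^ 2
      = ∫ x in Ω, (1 - 4*δ) * ‖g x‖ ^ 2 := (integral_const_mul _ _).symm
    _ ≤ ∫ x in Ω, |LinearMap.det (A x).toLinearMap| *
          ‖ContinuousLinearMap.adjoint (B x) (g x)‖ ^ 2 :=
        setIntegral_mono_on (hg.const_mul _) hRHS hΩ key
end
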